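/- Let q ∈ ℂ with 0 < |q| < 1, let a ∈ ℂ, let τ, x ∈ ℂ with τ ≠ 0, x ≠ 0, and suppose q^{m}·τ/x ≠ 1 for every integer m ≥ 0. Let f : ℂ → ℂ be such that f(τqⁿ) → f(0) as n → ∞ and such that the families n ↦ f(τqⁿ)·F(τqⁿ/x)·τqⁿ, n ↦ f(τqⁿ)·F(τqⁿ/(qx))·τqⁿ, and n ↦ (D_q f)(τqⁿ)·F(τqⁿ/x)·τqⁿ are summable. Put Φ(x) = ∫₀^τ f(t)·F(t/x) d_q t. Then ∫₀^τ (D_q f)(t)·F(t/x) d_q t = (a·Φ(x) − Φ(qx))/((1−q)x) + f(τ)·F(τ/(qx)) − f(0). (This is the commutation relation E_λ[D_x f](x) = q^{−λ} D_x E_λ[f](x) + boundary term for the q-Euler transform E_λ[f](x) = x^λ ∫₀^τ f(t) F(t/x) d_q t with a = q^{−λ}, written with the prefactor x^λ removed.) -/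

import Mathlib

open Filter Complex


/-- The `q`-derivative: `(D_q f)(x) = (f(x) − f(qx)) / ((1−q)x)`. -/
noncomputable def qDeriv (q : ℂ) (f : ℂ → ℂ) (x : ℂ) : ℂ :=
  (f x - f (q * x)) / ((1 - q) * x)

/-- The `q`-analogue of the Euler kernel:
`F(u) = ∏_{k=0}^∞ (1 − a q^{k+1} u)/(1 − q^{k+1} u)`. -/
noncomputable def kernelF (q a u : ℂ) : ℂ :=
  ∏' k : ℕ, (1 - a * q ^ (k + 1) * u) / (1 - q ^ (k + 1) * u)


/-- If one factor is zero, the infinite product is zero. -/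
lemma my_tprod_eq_zero (g : ℕ → ℂ) (k₀ : ℕ) (hk : g k₀ = 0) : ∏' k, g k = 0 := by
  have hp : HasProd g 0 := by
    have hev : ∀ᶠ s in (atTop : Filter (Finset ℕ)), (0 : ℂ) = ∏ i ∈ s, g i := by
      refine Filter.eventually_atTop.2 ⟨{k₀}, fun s hs => ?_⟩
      exact (Finset.prod_eq_zero (hs (Finset.mem_singleton_self k₀)) hk).symm
    exact (tendsto_const_nhds : Tendsto (fun _ : Finset ℕ => (0:ℂ)) atTop (nhds 0)).congr' hev
  exact hp.tprod_eq

/-- A nonvanishing product with summable logs is the exponential of the sum of logs. -/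
lemma my_tprod_eq_exp (g : ℕ → ℂ) (hg : ∀ k, g k ≠ 0)
    (hs : Summable fun k => Complex.log (g k)) :
    ∏' k, g k = Complex.exp (∑' k, Complex.log (g k)) := by
  have := Complex.cexp_tsum_eq_tprod hg hs
  simpa using this.symm

/-- The basic factor rewriting `(1 - a w)/(1 - w) = 1 + (1-a) w/(1-w)`. -/
lemma factor_form (a w : ℂ) (hw : (1:ℂ) - w ≠ 0) :
    (1 - a * w) / (1 - w) = 1 + (1 - a) * w / (1 - w) := by
  field_simp
  ring

lemma factor_bounds (a w : ℂ) (hw : ‖w‖ ≤ 1/2) (hw2 : (‖1 - a‖ + 1) * ‖w‖ ≤ 1/4) :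
    (1 - a * w) / (1 - w) ≠ 0 ∧
      ‖Complex.log ((1 - a * w) / (1 - w))‖ ≤ 3 * (‖1 - a‖ + 1) * ‖w‖ := by
  have hd : (1:ℂ) - w ≠ 0 := by
    intro hc
    have : ‖(1:ℂ)‖ ≤ 1/2 := by
      have : (1:ℂ) = w := by linear_combination hc
      rw [this]; exact hw
    simp at this; linarith
  have hdn : (1:ℝ)/2 ≤ ‖(1:ℂ) - w‖ := by
    have := norm_sub_norm_le (1:ℂ) w
    simp only [norm_one] at this
    linarith
  set z := (1 - a) * w / (1 - w) with hz
  have hzn : ‖z‖ ≤ 2 * (‖1 - a‖ + 1) * ‖w‖ := by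
    rw [hz, norm_div, norm_mul]
    rw [div_le_iff₀ (by linarith : (0:ℝ) < ‖(1:ℂ) - w‖)]
    have h1 : ‖1 - a‖ * ‖w‖ ≤ (‖1 - a‖ + 1) * ‖w‖ :=
      mul_le_mul_of_nonneg_right (by linarith) (norm_nonneg _)
    nlinarith [mul_nonneg (mul_nonneg (by positivity : (0:ℝ) ≤ ‖1 - a‖ + 1) (norm_nonneg w))
      (by linarith : (0:ℝ) ≤ 2 * ‖(1:ℂ) - w‖ - 1), h1]
  have hzh : ‖z‖ ≤ 1/2 := by nlinarith [norm_nonneg w, norm_nonneg (1 - a)]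
  have hform : (1 - a * w) / (1 - w) = 1 + z := factor_form a w hd
  constructor
  · rw [hform]
    intro hc
    have : ‖z‖ = 1 := by
      have : z = -1 := by linear_combination hc
      rw [this]; simp
    linarith
  · rw [hform]
    calc ‖Complex.log (1 + z)‖ ≤ 3/2 * ‖z‖ := norm_log_one_add_half_le_self hzh
      _ ≤ 3/2 * (2 * (‖1 - a‖ + 1) * ‖w‖) := by
          apply mul_le_mul_of_nonneg_left hzn; norm_num
      _ = 3 * (‖1 - a‖ + 1) * ‖w‖ := by ring

/-- Logs of the kernel factors are summable whenever the denominators don't vanish. -/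
lemma summable_log_factor (q a u : ℂ) (hq1 : ‖q‖ < 1)
    (hd : ∀ k : ℕ, (1:ℂ) - q ^ k * u ≠ 0) :
    Summable (fun k : ℕ => Complex.log ((1 - a * q ^ k * u) / (1 - q ^ k * u))) := by
  set ε : ℝ := min (1/2) (1/(4 * (‖1 - a‖ + 1))) with hε
  have hεpos : 0 < ε := by
    apply lt_min (by norm_num)
    positivity
  have htend : Tendsto (fun k : ℕ => ‖q‖ ^ k * ‖u‖) atTop (nhds 0) := by
    simpa using (tendsto_pow_atTop_nhds_zero_of_lt_one (norm_nonneg q) hq1).mul_const ‖u‖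
  have hev : ∀ᶠ k in atTop, ‖q‖ ^ k * ‖u‖ ≤ ε := by
    filter_upwards [htend.eventually (eventually_le_nhds hεpos)] with k hk using hk
  apply Summable.of_norm_bounded_eventually_nat
    (g := fun k => 3 * (‖1 - a‖ + 1) * ‖u‖ * ‖q‖ ^ k)
  · have : Summable (fun k : ℕ => ‖q‖ ^ k) := summable_geometric_of_lt_one (norm_nonneg q) hq1
    exact this.mul_left _
  · filter_upwards [hev] with k hk
    have hwk : ‖q ^ k * u‖ = ‖q‖ ^ k * ‖u‖ := by rw [norm_mul, norm_pow]
    have h1 : ‖q ^ k * u‖ ≤ 1/2 := by rw [hwk]; exact hk.trans (min_le_left _ _)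
    have h2 : (‖1 - a‖ + 1) * ‖q ^ k * u‖ ≤ 1/4 := by
      rw [hwk]
      have := hk.trans (min_le_right _ _)
      rw [le_div_iff₀ (by positivity : (0:ℝ) < 4 * (‖1 - a‖ + 1))] at this
      calc (‖1 - a‖ + 1) * (‖q‖ ^ k * ‖u‖) ≤ (‖1 - a‖ + 1) * (1/(4 * (‖1 - a‖ + 1))) := by
            apply mul_le_mul_of_nonneg_left _ (by positivity)
            exact hk.trans (min_le_right _ _)
        _ = 1/4 := by field_simp
    have := (factor_bounds a (q ^ k * u) h1 h2).2
    calc ‖Complex.log ((1 - a * q ^ k * u) / (1 - q ^ k * u))‖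
        ≤ 3 * (‖1 - a‖ + 1) * ‖q ^ k * u‖ := by
          rw [show a * q ^ k * u = a * (q ^ k * u) by ring]; exact this
      _ = 3 * (‖1 - a‖ + 1) * ‖u‖ * ‖q‖ ^ k := by rw [hwk]; ring

/-- Summability of the shifted logs. -/
lemma summable_log_factor' (q a u : ℂ) (hq1 : ‖q‖ < 1)
    (hd : ∀ k : ℕ, (1:ℂ) - q ^ (k + 1) * u ≠ 0) :
    Summable (fun k : ℕ => Complex.log ((1 - a * q ^ (k + 1) * u) / (1 - q ^ (k + 1) * u))) := by
  have h0 : ∀ k : ℕ, (1:ℂ) - q ^ k * (q * u) ≠ 0 := by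
    intro k
    have := hd k
    rwa [show q ^ k * (q * u) = q ^ (k + 1) * u by ring]
  have := summable_log_factor q a (q * u) hq1 h0
  apply this.congr
  intro k
  congr 1 <;> ring_nf

/-- `kernelF` as an exponential when no factor vanishes. -/
lemma kernelF_eq_exp (q a u : ℂ) (hq1 : ‖q‖ < 1)
    (hd : ∀ k : ℕ, (1:ℂ) - q ^ (k + 1) * u ≠ 0)
    (hn : ∀ k : ℕ, (1:ℂ) - a * q ^ (k + 1) * u ≠ 0) :
    kernelF q a u =
      Complex.exp (∑' k : ℕ, Complex.log ((1 - a * q ^ (k + 1) * u) / (1 - q ^ (k + 1) * u))) :=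
  my_tprod_eq_exp _ (fun k => div_ne_zero (hn k) (hd k)) (summable_log_factor' q a u hq1 hd)

/-- `kernelF` vanishes if some numerator factor vanishes. -/
lemma kernelF_eq_zero (q a u : ℂ) (k₀ : ℕ) (hk : (1:ℂ) - a * q ^ (k₀ + 1) * u = 0) :
    kernelF q a u = 0 :=
  my_tprod_eq_zero _ k₀ (by rw [hk, zero_div])

/-- The key functional equation `F(u/q) = ((1 - a u)/(1 - u)) F(u)`. -/
lemma kernelF_shift (q a u : ℂ) (hq0 : q ≠ 0) (hq1 : ‖q‖ < 1)
    (hd : ∀ m : ℕ, (1:ℂ) - q ^ m * u ≠ 0) :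
    kernelF q a (u / q) = (1 - a * u) / (1 - u) * kernelF q a u := by
  have harg : ∀ k : ℕ, (1 - a * q ^ (k + 1) * (u / q)) / (1 - q ^ (k + 1) * (u / q))
      = (1 - a * q ^ k * u) / (1 - q ^ k * u) := by
    intro k
    have h1 : q ^ (k + 1) * (u / q) = q ^ k * u := by
      field_simp
      ring
    rw [show a * q ^ (k + 1) * (u / q) = a * (q ^ (k + 1) * (u / q)) by ring, h1,
      show a * (q ^ k * u) = a * q ^ k * u by ring]
  have hL : kernelF q a (u / q) = ∏' k : ℕ, (1 - a * q ^ k * u) / (1 - q ^ k * u) :=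
    tprod_congr harg
  by_cases hn : ∀ m : ℕ, (1:ℂ) - a * q ^ m * u ≠ 0
  · -- no vanishing factors: use exp representation
    have hsum : Summable (fun k : ℕ => Complex.log ((1 - a * q ^ k * u) / (1 - q ^ k * u))) :=
      summable_log_factor q a u hq1 hd
    have hL2 : kernelF q a (u / q) =
        Complex.exp (∑' k : ℕ, Complex.log ((1 - a * q ^ k * u) / (1 - q ^ k * u))) := by
      rw [hL]
      exact my_tprod_eq_exp _ (fun k => div_ne_zero (hn k) (hd k)) hsum
    have hR : kernelF q a u =
        Complex.exp (∑' k : ℕ, Complex.log ((1 - a * q ^ (k + 1) * u) / (1 - q ^ (k + 1) * u))) :=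
      kernelF_eq_exp q a u hq1 (fun k => hd (k + 1)) (fun k => hn (k + 1))
    rw [hL2, hR, Summable.tsum_eq_zero_add hsum, Complex.exp_add]
    congr 1
    · rw [Complex.exp_log (div_ne_zero (by simpa using hn 0) (by simpa using hd 0))]
      simp
  · -- some factor vanishes
    push_neg at hn
    obtain ⟨m, hm⟩ := hn
    have hLz : kernelF q a (u / q) = 0 := by
      rw [hL]; exact my_tprod_eq_zero _ m (by rw [hm, zero_div])
    rw [hLz]
    rcases m with - | j
    · have : (1:ℂ) - a * u = 0 := by simpa using hm
      rw [this, zero_div, zero_mul]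
    · rw [kernelF_eq_zero q a u j hm, mul_zero]


lemma kernelF_tendsto_one (q a τ x : ℂ) (hq0 : q ≠ 0) (hq1 : ‖q‖ < 1)
    (hx : x ≠ 0) (h : ∀ m : ℕ, q ^ m * τ / x ≠ 1) :
    Tendsto (fun n : ℕ => kernelF q a (τ * q ^ n / (q * x))) atTop (nhds 1) := by
  set w : ℂ := τ / x with hw
  -- the k-th factor argument
  have harg : ∀ n k : ℕ, q ^ (k + 1) * (τ * q ^ n / (q * x)) = q ^ (n + k) * w := by
    intro n k
    rw [hw]
    field_simp
    ring
  have hdarg : ∀ m : ℕ, (1:ℂ) - q ^ m * w ≠ 0 := by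
    intro m
    rw [hw, sub_ne_zero, mul_div_assoc'] 
    exact (h m).symm
  set ε : ℝ := min (1/2) (1/(4 * (‖1 - a‖ + 1))) with hε
  have hεpos : 0 < ε := lt_min (by norm_num) (by positivity)
  have htend : Tendsto (fun n : ℕ => ‖q‖ ^ n * ‖w‖) atTop (nhds 0) := by
    simpa using (tendsto_pow_atTop_nhds_zero_of_lt_one (norm_nonneg q) hq1).mul_const ‖w‖
  have hev : ∀ᶠ n in atTop, ‖q‖ ^ n * ‖w‖ ≤ ε :=
    htend.eventually (eventually_le_nhds hεpos)
  -- for n with small norm, uniform smallness in k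
  have hsmall : ∀ n : ℕ, ‖q‖ ^ n * ‖w‖ ≤ ε → ∀ k : ℕ, ‖q ^ (n + k) * w‖ ≤ ε := by
    intro n hn k
    rw [norm_mul, norm_pow, pow_add]
    calc ‖q‖ ^ n * ‖q‖ ^ k * ‖w‖ ≤ ‖q‖ ^ n * 1 * ‖w‖ := by
          apply mul_le_mul_of_nonneg_right _ (norm_nonneg w)
          exact mul_le_mul_of_nonneg_left (pow_le_one₀ (norm_nonneg q) hq1.le) (by positivity)
      _ = ‖q‖ ^ n * ‖w‖ := by ring
      _ ≤ ε := hn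
  have hbounds : ∀ v : ℂ, ‖v‖ ≤ ε → (1:ℂ) - a * v ≠ 0 ∧
      ‖Complex.log ((1 - a * v) / (1 - v))‖ ≤ 3 * (‖1 - a‖ + 1) * ‖v‖ := by
    intro v hv
    have h1 : ‖v‖ ≤ 1/2 := hv.trans (min_le_left _ _)
    have h2 : (‖1 - a‖ + 1) * ‖v‖ ≤ 1/4 := by
      have h3 := hv.trans (min_le_right _ _)
      calc (‖1 - a‖ + 1) * ‖v‖ ≤ (‖1 - a‖ + 1) * (1/(4 * (‖1 - a‖ + 1))) :=
            mul_le_mul_of_nonneg_left h3 (by positivity)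
        _ = 1/4 := by field_simp
    obtain ⟨hne, hlog⟩ := factor_bounds a v h1 h2
    refine ⟨?_, hlog⟩
    intro hc
    apply hne
    rw [hc, zero_div]
  -- the sum of logs, and its bound
  set S : ℕ → ℂ := fun n =>
    ∑' k : ℕ, Complex.log ((1 - a * q ^ (k + 1) * (τ * q ^ n / (q * x)))
      / (1 - q ^ (k + 1) * (τ * q ^ n / (q * x)))) with hS
  have hkey : ∀ᶠ n in atTop,
      kernelF q a (τ * q ^ n / (q * x)) = Complex.exp (S n) ∧
        ‖S n‖ ≤ (3 * (‖1 - a‖ + 1) * ‖w‖ * (1 - ‖q‖)⁻¹) * ‖q‖ ^ n := by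
    filter_upwards [hev] with n hn
    have hd : ∀ k : ℕ, (1:ℂ) - q ^ (k + 1) * (τ * q ^ n / (q * x)) ≠ 0 := by
      intro k; rw [harg n k]; exact hdarg (n + k)
    have hnum : ∀ k : ℕ, (1:ℂ) - a * (q ^ (k + 1) * (τ * q ^ n / (q * x))) ≠ 0 := by
      intro k; rw [harg n k]
      exact (hbounds _ (hsmall n hn k)).1
    have hlogb : ∀ k : ℕ, ‖Complex.log ((1 - a * q ^ (k + 1) * (τ * q ^ n / (q * x)))
        / (1 - q ^ (k + 1) * (τ * q ^ n / (q * x))))‖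
        ≤ (3 * (‖1 - a‖ + 1) * ‖w‖ * ‖q‖ ^ n) * ‖q‖ ^ k := by
      intro k
      rw [show a * q ^ (k + 1) * (τ * q ^ n / (q * x))
        = a * (q ^ (k + 1) * (τ * q ^ n / (q * x))) by ring, harg n k]
      calc ‖Complex.log ((1 - a * (q ^ (n + k) * w)) / (1 - q ^ (n + k) * w))‖
          ≤ 3 * (‖1 - a‖ + 1) * ‖q ^ (n + k) * w‖ := (hbounds _ (hsmall n hn k)).2
        _ = (3 * (‖1 - a‖ + 1) * ‖w‖ * ‖q‖ ^ n) * ‖q‖ ^ k := by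
            rw [norm_mul, norm_pow, pow_add]; ring
    have hgeo : Summable (fun k : ℕ => (3 * (‖1 - a‖ + 1) * ‖w‖ * ‖q‖ ^ n) * ‖q‖ ^ k) :=
      (summable_geometric_of_lt_one (norm_nonneg q) hq1).mul_left _
    have hsumn : Summable (fun k : ℕ => ‖Complex.log ((1 - a * q ^ (k + 1) * (τ * q ^ n / (q * x)))
        / (1 - q ^ (k + 1) * (τ * q ^ n / (q * x))))‖) :=
      Summable.of_nonneg_of_le (fun k => norm_nonneg _) hlogb hgeo
    constructor
    · exact kernelF_eq_exp q a _ hq1 hd (fun k => by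
        have := hnum k
        rwa [show a * (q ^ (k + 1) * (τ * q ^ n / (q * x)))
          = a * q ^ (k + 1) * (τ * q ^ n / (q * x)) by ring] at this)
    · calc ‖S n‖ ≤ ∑' k, ‖Complex.log ((1 - a * q ^ (k + 1) * (τ * q ^ n / (q * x)))
          / (1 - q ^ (k + 1) * (τ * q ^ n / (q * x))))‖ := norm_tsum_le_tsum_norm hsumn
        _ ≤ ∑' k, (3 * (‖1 - a‖ + 1) * ‖w‖ * ‖q‖ ^ n) * ‖q‖ ^ k := Summable.tsum_le_tsum hlogb hsumn hgeo
        _ = (3 * (‖1 - a‖ + 1) * ‖w‖ * ‖q‖ ^ n) * (1 - ‖q‖)⁻¹ := by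
            rw [tsum_mul_left, tsum_geometric_of_lt_one (norm_nonneg q) hq1]
        _ = (3 * (‖1 - a‖ + 1) * ‖w‖ * (1 - ‖q‖)⁻¹) * ‖q‖ ^ n := by ring
  -- S n → 0
  have hS0 : Tendsto S atTop (nhds 0) := by
    apply squeeze_zero_norm' (hkey.mono fun n hn => hn.2)
    have : Tendsto (fun n : ℕ => ‖q‖ ^ n) atTop (nhds 0) :=
      tendsto_pow_atTop_nhds_zero_of_lt_one (norm_nonneg q) hq1
    simpa using this.const_mul (3 * (‖1 - a‖ + 1) * ‖w‖ * (1 - ‖q‖)⁻¹)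
  have : Tendsto (fun n => Complex.exp (S n)) atTop (nhds 1) := by
    have := (Complex.continuous_exp.tendsto 0).comp hS0
    simpa [Function.comp_def] using this
  exact this.congr' ((hkey.mono fun n hn => hn.1.symm))


/-- Commutation of the `q`-Euler transform with the `q`-derivative:
`∫₀^τ (D_q f)(t) F(t/x) d_q t = (aΦ(x) − Φ(qx))/((1−q)x) + f(τ)F(τ/(qx)) − f(0)`,
where `Φ(x) = ∫₀^τ f(t) F(t/x) d_q t`. -/
theorem euler_transform_qDeriv (q a τ x : ℂ) (hq0 : 0 < ‖q‖) (hq1 : ‖q‖ < 1)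
    (hτ : τ ≠ 0) (hx : x ≠ 0) (h : ∀ m : ℕ, q ^ m * τ / x ≠ 1)
    (f : ℂ → ℂ)
    (hf0 : Filter.Tendsto (fun n : ℕ => f (τ * q ^ n)) Filter.atTop (nhds (f 0)))
    (h1 : Summable (fun n : ℕ =>
      f (τ * q ^ n) * kernelF q a (τ * q ^ n / x) * (τ * q ^ n)))
    (h2 : Summable (fun n : ℕ =>
      f (τ * q ^ n) * kernelF q a (τ * q ^ n / (q * x)) * (τ * q ^ n)))
    (h3 : Summable (fun n : ℕ =>
      qDeriv q f (τ * q ^ n) * kernelF q a (τ * q ^ n / x) * (τ * q ^ n))) :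
    (1 - q) * ∑' n : ℕ, qDeriv q f (τ * q ^ n) * kernelF q a (τ * q ^ n / x) * (τ * q ^ n) =
      (a * ((1 - q) * ∑' n : ℕ, f (τ * q ^ n) * kernelF q a (τ * q ^ n / x) * (τ * q ^ n))
          - (1 - q) * ∑' n : ℕ, f (τ * q ^ n) * kernelF q a (τ * q ^ n / (q * x)) * (τ * q ^ n))
        / ((1 - q) * x)
      + f τ * kernelF q a (τ / (q * x)) - f 0 := by
  have hqne : q ≠ 0 := by simpa using hq0.ne'
  have hq1ne : (1:ℂ) - q ≠ 0 := by
    intro hc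
    have : q = 1 := by linear_combination -hc
    rw [this] at hq1; simp at hq1
  -- the boundary sequence
  set g : ℕ → ℂ := fun n => f (τ * q ^ n) * kernelF q a (τ * q ^ n / (q * x)) with hg
  set F1 : ℕ → ℂ := fun n => f (τ * q ^ n) * kernelF q a (τ * q ^ n / x) * (τ * q ^ n) with hF1
  set F2 : ℕ → ℂ := fun n => f (τ * q ^ n) * kernelF q a (τ * q ^ n / (q * x)) * (τ * q ^ n)
    with hF2
  set F3 : ℕ → ℂ := fun n => qDeriv q f (τ * q ^ n) * kernelF q a (τ * q ^ n / x) * (τ * q ^ n)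
    with hF3
  -- the pointwise identity
  have main_id : ∀ n : ℕ, g n - g (n + 1) = (1 - q) * F3 n - (a * F1 n - F2 n) / x := by
    intro n
    have htq : τ * q ^ n ≠ 0 := mul_ne_zero hτ (pow_ne_zero n hqne)
    have hu : (1:ℂ) - τ * q ^ n / x ≠ 0 := by
      rw [sub_ne_zero]
      have := (h n).symm
      rwa [show q ^ n * τ / x = τ * q ^ n / x by ring] at this
    -- shift identity at u = τ q^n / x
    have hshift : kernelF q a (τ * q ^ n / (q * x)) =
        (1 - a * (τ * q ^ n / x)) / (1 - τ * q ^ n / x) * kernelF q a (τ * q ^ n / x) := by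
      have hd : ∀ m : ℕ, (1:ℂ) - q ^ m * (τ * q ^ n / x) ≠ 0 := by
        intro m
        rw [sub_ne_zero, show q ^ m * (τ * q ^ n / x) = q ^ (m + n) * τ / x by
          rw [pow_add]; ring]
        exact (h (m + n)).symm
      have := kernelF_shift q a (τ * q ^ n / x) hqne hq1 hd
      rwa [show τ * q ^ n / x / q = τ * q ^ n / (q * x) by
        rw [div_div, mul_comm x q]] at this
    have harg2 : τ * q ^ (n + 1) / (q * x) = τ * q ^ n / x := by
      field_simp
      ring
    have hfq : f (q * (τ * q ^ n)) = f (τ * q ^ (n + 1)) := by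
      congr 1; ring
    have hu' : x - τ * q ^ n ≠ 0 := by
      intro hc
      apply hu
      rw [show τ * q ^ n = x by linear_combination -hc, div_self hx, sub_self]
    simp only [hg, hF1, hF2, hF3]
    rw [hshift, harg2]
    simp only [qDeriv, hfq]
    field_simp
    ring
  -- summabilities
  have hA : Summable (fun n => (1 - q) * F3 n) := h3.mul_left _
  have hB : Summable (fun n => (a * F1 n - F2 n) / x) := ((h1.mul_left a).sub h2).div_const x
  have hd : Summable (fun n => g n - g (n + 1)) := by
    exact (hA.sub hB).congr fun n => (main_id n).symm
  -- telescoping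
  have hglim : Tendsto g atTop (nhds (f 0)) := by
    have := hf0.mul (kernelF_tendsto_one q a τ x hqne hq1 hx h)
    simpa using this
  have htel : ∑' n, (g n - g (n + 1)) = g 0 - f 0 := by
    have h1' : Tendsto (fun N => ∑ i ∈ Finset.range N, (g i - g (i + 1))) atTop
        (nhds (∑' n, (g n - g (n + 1)))) := hd.hasSum.tendsto_sum_nat
    have h2' : Tendsto (fun N => ∑ i ∈ Finset.range N, (g i - g (i + 1))) atTop
        (nhds (g 0 - f 0)) := by
      have : (fun N => ∑ i ∈ Finset.range N, (g i - g (i + 1))) = fun N => g 0 - g N := by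
        funext N; exact Finset.sum_range_sub' g N
      rw [this]
      exact tendsto_const_nhds.sub hglim
    exact tendsto_nhds_unique h1' h2'
  -- put things together
  have hsum_eq : (1 - q) * ∑' n, F3 n - (a * ∑' n, F1 n - ∑' n, F2 n) / x = g 0 - f 0 := by
    rw [← htel]
    rw [tsum_congr main_id, Summable.tsum_sub hA hB, tsum_mul_left, tsum_div_const,
      Summable.tsum_sub (h1.mul_left a) h2, tsum_mul_left]
  have hg0 : g 0 = f τ * kernelF q a (τ / (q * x)) := by
    rw [hg]; simp
  have hdiv : (a * ((1 - q) * ∑' n, F1 n) - (1 - q) * ∑' n, F2 n) / ((1 - q) * x)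
      = (a * ∑' n, F1 n - ∑' n, F2 n) / x := by
    field_simp
  rw [hdiv, ← hg0]
  linear_combination hsum_eq
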